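/- Let V and W be 4×4 complex matrices with conj(V)ᵀ · H · V = H and conj(W)ᵀ · H · W = H, and suppose there exists l ∈ ℂ, l ≠ 0, such that the 0th column of W equals l times the 0th column of V. Then there exist a₁, a₂, c₁, c₂ ∈ ℂ and r, t ∈ ℝ with |a₁|² + ε|a₂|² = 1 such that W = V · p_l · p₀, where p_l = diag(l, 1, 1, (conj l)⁻¹) and p₀ is the matrix with rows (1, −i(a₁·conj c₁ + ε a₂·conj c₂), ε i e^{ir}(conj a₂·conj c₁ − conj a₁·conj c₂), c₀), (0, a₁, −ε e^{ir}·conj a₂, c₁), (0, a₂, e^{ir}·conj a₁, c₂), (0, 0, 0, 1) and c₀ = t − (i/2)(|c₁|² + ε|c₂|²). -/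

import Mathlib

open Matrix Complex ComplexConjugate

/-- The Hermitian form matrix `H` with `H₀₃ = i`, `H₃₀ = -i`, `H₁₁ = 1`, `H₂₂ = ε`. -/
noncomputable def Hmat (ε : ℂ) : Matrix (Fin 4) (Fin 4) ℂ :=
  !![0, 0, 0, I;
     0, 1, 0, 0;
     0, 0, ε, 0;
     -I, 0, 0, 0]

/-- The matrix `p₀`, with `c₀ = t - (i/2)(|c₁|² + ε|c₂|²)`. -/
noncomputable def p0 (ε a₁ a₂ c₁ c₂ : ℂ) (r t : ℝ) : Matrix (Fin 4) (Fin 4) ℂ :=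
  !![1, -I * (a₁ * conj c₁ + ε * a₂ * conj c₂),
       ε * I * Complex.exp (I * r) * (conj a₂ * conj c₁ - conj a₁ * conj c₂),
       (t : ℂ) - I / 2 * ((‖c₁‖ : ℂ) ^ 2 + ε * (‖c₂‖ : ℂ) ^ 2);
     0, a₁, -ε * Complex.exp (I * r) * conj a₂, c₁;
     0, a₂, Complex.exp (I * r) * conj a₁, c₂;
     0, 0, 0, 1]

/-- The diagonal matrix `p_l = diag(l, 1, 1, (conj l)⁻¹)`. -/
noncomputable def pl (l : ℂ) : Matrix (Fin 4) (Fin 4) ℂ :=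
  diagonal ![l, 1, 1, (conj l)⁻¹]

private lemma abs_one_of {z : ℂ} (h : conj z * z = 1) : ‖z‖ = 1 := by
  have h1 : (Complex.normSq z : ℂ) = 1 := by rw [Complex.normSq_eq_conj_mul_self]; exact h
  have h2 : Complex.normSq z = 1 := by exact_mod_cast h1
  rw [Complex.norm_def, h2, Real.sqrt_one]

private lemma mu_exists (ε a₁ a₂ x y : ℂ) (hε : ε = 1 ∨ ε = -1)
    (hnorm : conj a₁ * a₁ + conj a₂ * ε * a₂ = 1)
    (hlin : conj a₁ * x + conj a₂ * ε * y = 0)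
    (hnorm2 : conj x * x + conj y * ε * y = ε) :
    ∃ μ : ℂ, ‖μ‖ = 1 ∧ x = -ε * μ * conj a₂ ∧ y = μ * conj a₁ := by
  have hε2 : ε * ε = 1 := by rcases hε with h | h <;> simp [h]
  have hεc : conj ε = ε := by rcases hε with h | h <;> simp [h]
  have hεne : ε ≠ 0 := by rcases hε with h | h <;> simp [h]
  by_cases ha₁ : a₁ = 0
  · have ha₂ : conj a₂ * ε * a₂ = 1 := by rw [ha₁] at hnorm; simpa using hnorm
    have hε1 : ε = 1 := by
      rcases hε with h | h
      · exact h
      · exfalso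
        rw [h] at ha₂
        have hns : (Complex.normSq a₂ : ℂ) = -1 := by
          rw [Complex.normSq_eq_conj_mul_self]; linear_combination -ha₂
        have := congrArg Complex.re hns
        simp at this
        nlinarith [Complex.normSq_nonneg a₂]
    rw [hε1, mul_one] at ha₂
    have ha₂ne : a₂ ≠ 0 := by intro h; rw [h] at ha₂; simp at ha₂
    have hca₂ : conj a₂ ≠ 0 := by simpa using ha₂ne
    have hy : y = 0 := by
      rw [ha₁, hε1] at hlin
      simp at hlin
      tauto
    have hx1 : conj x * x = 1 := by
      rw [hy, hε1] at hnorm2; simpa using hnorm2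
    refine ⟨-x * a₂, ?_, ?_, ?_⟩
    · have habs : ‖-x * a₂‖ = ‖x‖ * ‖a₂‖ := by
        rw [neg_mul, norm_neg, norm_mul]
      rw [habs, abs_one_of hx1, abs_one_of ha₂, mul_one]
    · rw [hε1]; linear_combination -x * ha₂
    · rw [hy, ha₁]; simp
  · have hca₁ : conj a₁ ≠ 0 := by simpa using ha₁
    set μ := y / conj a₁ with hμdef
    have hy' : y = μ * conj a₁ := by rw [hμdef]; field_simp
    have hx' : x = -ε * μ * conj a₂ := by
      have h1 : -ε * (y / conj a₁) * conj a₂ = (-ε * y * conj a₂) / conj a₁ := by ring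
      rw [hμdef, h1, eq_div_iff hca₁]
      linear_combination hlin
    have hcx : conj x = -ε * conj μ * a₂ := by
      rw [hx']; simp only [_root_.map_mul, map_neg, hεc, Complex.conj_conj]
    have hcy : conj y = conj μ * a₁ := by
      rw [hy']; simp only [_root_.map_mul, Complex.conj_conj]
    have h := hnorm2
    rw [hcx, hcy, hx', hy'] at h
    have hkey : conj μ * μ * ε = 1 * ε := by
      rw [one_mul]; linear_combination h - ε * (conj μ * μ) * hnorm
    have hμ1 : conj μ * μ = 1 := mul_right_cancel₀ hεne hkey
    exact ⟨μ, abs_one_of hμ1, hx', hy'⟩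

set_option maxHeartbeats 1000000 in
/-- two Hermitian frames whose 0th columns are ℂ-collinear
(`W·e₀ = l V·e₀`, `l ≠ 0`) differ by a transformation `p_l p₀`. -/
theorem stmt7 (ε : ℂ) (hε : ε = 1 ∨ ε = -1) (V W : Matrix (Fin 4) (Fin 4) ℂ)
    (hV : Vᴴ * Hmat ε * V = Hmat ε) (hW : Wᴴ * Hmat ε * W = Hmat ε)
    (l : ℂ) (hl : l ≠ 0) (hcol : ∀ i, W i 0 = l * V i 0) :
    ∃ (a₁ a₂ c₁ c₂ : ℂ) (r t : ℝ),
      (‖a₁‖ : ℂ) ^ 2 + ε * (‖a₂‖ : ℂ) ^ 2 = 1 ∧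
      W = V * pl l * p0 ε a₁ a₂ c₁ c₂ r t := by
  have hε2 : ε * ε = 1 := by rcases hε with h | h <;> simp [h]
  have hεc : conj ε = ε := by rcases hε with h | h <;> simp [h]
  have hεne : ε ≠ 0 := by rcases hε with h | h <;> simp [h]
  have hcl : conj l ≠ 0 := by simpa using hl
  -- V is invertible
  have hdetH : (Hmat ε).det = -ε := by
    norm_num [Hmat, Matrix.det_succ_row_zero, Fin.sum_univ_succ, Fin.castSucc, Fin.castAdd, Fin.castLE, Matrix.cons_val]
    simp [Matrix.vecCons, Fin.cons, Fin.cases, Fin.induction, Fin.induction.go]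
    linear_combination (-ε) * Complex.I_mul_I
  have hdV : IsUnit V.det := by
    rw [isUnit_iff_ne_zero]
    intro h
    have := congrArg Matrix.det hV
    rw [Matrix.det_mul, Matrix.det_mul, Matrix.det_conjTranspose, h, hdetH] at this
    simp at this
    exact hεne this
  have hVinv : V⁻¹ * V = 1 := Matrix.nonsing_inv_mul V hdV
  have hVinv' : V * V⁻¹ = 1 := Matrix.mul_nonsing_inv V hdV
  set P := V⁻¹ * W with hPdef
  have hVP : V * P = W := by
    rw [hPdef, ← Matrix.mul_assoc, hVinv', Matrix.one_mul]
  have h1 : (V⁻¹)ᴴ * Hmat ε * V⁻¹ = Hmat ε := by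
    have e1 : (V⁻¹)ᴴ * Vᴴ = 1 := by rw [← Matrix.conjTranspose_mul, hVinv']; simp
    calc (V⁻¹)ᴴ * Hmat ε * V⁻¹ = (V⁻¹)ᴴ * (Vᴴ * Hmat ε * V) * V⁻¹ := by rw [hV]
      _ = ((V⁻¹)ᴴ * Vᴴ) * Hmat ε * (V * V⁻¹) := by simp only [Matrix.mul_assoc]
      _ = Hmat ε := by rw [e1, hVinv', Matrix.one_mul, Matrix.mul_one]
  have hP : Pᴴ * Hmat ε * P = Hmat ε := by
    rw [hPdef, Matrix.conjTranspose_mul]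
    calc Wᴴ * (V⁻¹)ᴴ * Hmat ε * (V⁻¹ * W)
        = Wᴴ * ((V⁻¹)ᴴ * Hmat ε * V⁻¹) * W := by simp only [Matrix.mul_assoc]
      _ = Hmat ε := by rw [h1]; exact hW
  have hPcol : ∀ i, P i 0 = if i = 0 then l else 0 := by
    intro i
    rw [hPdef, Matrix.mul_apply]
    calc ∑ k, V⁻¹ i k * W k 0 = ∑ k, l * (V⁻¹ i k * V k 0) := by
          refine Finset.sum_congr rfl fun k _ => ?_
          rw [hcol]; ring
      _ = l * (V⁻¹ * V) i 0 := by rw [Matrix.mul_apply, Finset.mul_sum]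
      _ = if i = 0 then l else 0 := by
          rw [hVinv, Matrix.one_apply]
          by_cases h : i = 0 <;> simp [h]
  have hP00 : P 0 0 = l := by simpa using hPcol 0
  have hP10 : P 1 0 = 0 := by simpa using hPcol 1
  have hP20 : P 2 0 = 0 := by simpa using hPcol 2
  have hP30 : P 3 0 = 0 := by simpa using hPcol 3
  have key : ∀ i j, (Pᴴ * Hmat ε * P) i j = Hmat ε i j := fun i j => by rw [hP]
  have E01 := key 0 1
  have E02 := key 0 2
  have E03 := key 0 3
  have E11 := key 1 1
  have E12 := key 1 2
  have E13 := key 1 3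
  have E22 := key 2 2
  have E23 := key 2 3
  have E33 := key 3 3
  simp [Hmat, Matrix.mul_apply, Fin.sum_univ_four, Matrix.conjTranspose_apply,
    Matrix.vecHead, Matrix.vecTail] at E01 E02 E03 E11 E12 E13 E22 E23 E33
  rw [hP00, hP10, hP20, hP30] at E01 E02 E03
  simp only [map_zero, zero_mul, mul_zero, add_zero, zero_add, neg_zero] at E01 E02 E03
  have hP31 : P 3 1 = 0 := by
    simpa [hcl, Complex.I_ne_zero, mul_eq_zero] using E01
  have hP32 : P 3 2 = 0 := by
    simpa [hcl, Complex.I_ne_zero, mul_eq_zero] using E02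
  have hP33 : P 3 3 = (conj l)⁻¹ := by
    have h1 : conj l * P 3 3 = 1 := by
      linear_combination (-I) * E03 + (conj l * P 3 3 - 1) * Complex.I_mul_I
    exact eq_inv_of_mul_eq_one_left (by linear_combination h1)
  simp only [hP31, hP32, hP33, map_zero, zero_mul, mul_zero, add_zero, zero_add, neg_zero,
    map_inv₀, Complex.conj_conj] at E11 E12 E13 E22 E23 E33
  set a₁ := P 1 1 with ha1d
  set a₂ := P 2 1 with ha2d
  set c₁ := P 1 3 with hc1d
  set c₂ := P 2 3 with hc2d
  obtain ⟨μ, habs, hx, hy⟩ := mu_exists ε a₁ a₂ (P 1 2) (P 2 2) hε E11 E12 E22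
  have hμ : Complex.exp (I * (μ.arg : ℝ)) = μ := by
    rw [mul_comm]
    have h := Complex.norm_mul_exp_arg_mul_I μ
    rw [habs] at h
    simpa using h
  have hμμ : conj μ * μ = 1 := by
    have h1 : Complex.normSq μ = 1 := by rw [← Complex.sq_norm, habs]; norm_num
    rw [← Complex.normSq_eq_conj_mul_self]
    exact_mod_cast h1
  -- solve for P 0 1
  have E13c := congrArg (starRingEnd ℂ) E13
  simp only [map_add, _root_.map_mul, map_zero, map_inv₀, Complex.conj_conj,
    Complex.conj_I, hεc] at E13c
  have hP01 : P 0 1 = l * (-I * (a₁ * conj c₁ + ε * a₂ * conj c₂)) := by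
    field_simp at E13c
    linear_combination I * E13c + P 0 1 * Complex.I_mul_I
  -- solve for P 0 2
  have E23c := congrArg (starRingEnd ℂ) E23
  simp only [map_add, _root_.map_mul, map_zero, map_inv₀, Complex.conj_conj,
    Complex.conj_I, hεc] at E23c
  rw [hx, hy] at E23c
  have hP02 : P 0 2 = l * (ε * I * μ * (conj a₂ * conj c₁ - conj a₁ * conj c₂)) := by
    field_simp at E23c
    linear_combination I * E23c + P 0 2 * Complex.I_mul_I
  -- solve for P 0 3
  set w : ℂ := l⁻¹ * P 0 3 with hwd
  have hw : P 0 3 = l * w := by rw [hwd]; field_simp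
  rw [hw] at E33
  simp only [_root_.map_mul] at E33
  have hc1abs : ((‖c₁‖ : ℂ))^2 = c₁ * conj c₁ := (Complex.mul_conj' c₁).symm
  have hc2abs : ((‖c₂‖ : ℂ))^2 = c₂ * conj c₂ := (Complex.mul_conj' c₂).symm
  have hsub := Complex.sub_conj w
  have hP03 : P 0 3 = l * ((w.re : ℂ) - I / 2 * ((‖c₁‖ : ℂ) ^ 2 + ε * (‖c₂‖ : ℂ) ^ 2)) := by
    field_simp at E33
    have hlcl : l * conj l ≠ 0 := mul_ne_zero hl hcl
    have hE : -(I * w) + conj c₁ * c₁ + conj c₂ * ε * c₂ + I * conj w = 0 := by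
      have h2 : (-(I * w) + conj c₁ * c₁ + conj c₂ * ε * c₂ + I * conj w) * (l * conj l) = 0 := by
        linear_combination (l * conj l) * E33
      rcases mul_eq_zero.mp h2 with h | h
      · exact h
      · exact absurd h hlcl
    push_cast at hsub
    rw [hw, hc1abs, hc2abs]
    linear_combination l * ((I/2) * hE + (I*I/2) * hsub + I * (w.im : ℂ) * Complex.I_mul_I - Complex.re_add_im w)
  refine ⟨a₁, a₂, c₁, c₂, μ.arg, w.re, ?_, ?_⟩
  · have h1 : ((‖a₁‖ : ℂ))^2 = a₁ * conj a₁ := (Complex.mul_conj' a₁).symm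
    have h2 : ((‖a₂‖ : ℂ))^2 = a₂ * conj a₂ := (Complex.mul_conj' a₂).symm
    rw [h1, h2]; linear_combination E11
  · rw [← hVP, Matrix.mul_assoc]
    congr 1
    ext i j
    fin_cases i <;> fin_cases j <;>
      simp [pl, p0, Matrix.diagonal_mul, Matrix.vecHead, Matrix.vecTail] <;>
      [exact hP00;
       (rw [hP01]; ring);
       (rw [hμ]; exact hP02);
       exact hP03;
       exact hP10;
       rfl;
       (rw [hμ, hx]; ring);
       rfl;
       exact hP20;
       rfl;
       (rw [hμ]; exact hy);
       rfl;
       exact hP30;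
       exact hP31;
       exact hP32;
       exact hP33]
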